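/- Every P in R^{2n×2n} with P^2 = P, P^+ = P, and rank(P) = 2k can be written as P = UU^+ for some U in SpSt(2n,2k). -/

import Mathlib

open Matrix

noncomputable section

/-- The standard symplectic matrix `J = [[0, I],[-I, 0]]` of size `2m`. -/
def Jmat (m : ℕ) : Matrix (Fin m ⊕ Fin m) (Fin m ⊕ Fin m) ℝ :=
  Matrix.fromBlocks 0 1 (-1) 0

/-- The symplectic inverse `A⁺ = J₂ₖᵀ Aᵀ J₂ₙ` of a `2n × 2k` real matrix. -/
def sympInv {n k : ℕ} (A : Matrix (Fin n ⊕ Fin n) (Fin k ⊕ Fin k) ℝ) :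
    Matrix (Fin k ⊕ Fin k) (Fin n ⊕ Fin n) ℝ :=
  (Jmat k)ᵀ * Aᵀ * Jmat n

open Module

lemma Jmat_transpose (m : ℕ) : (Jmat m)ᵀ = -Jmat m := by
  ext (i | i) (j | j) <;>
    simp [Jmat, Matrix.fromBlocks_transpose, Matrix.one_apply, eq_comm]

lemma Jmat_mul_Jmat (m : ℕ) : Jmat m * Jmat m = -1 := by
  ext (i | i) (j | j) <;>
    simp [Jmat, Matrix.fromBlocks_multiply, Matrix.one_apply]

lemma J_mul_Jt (m : ℕ) : Jmat m * (Jmat m)ᵀ = 1 := by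
  rw [Jmat_transpose, Matrix.mul_neg, Jmat_mul_Jmat, neg_neg]

lemma Jt_mul_J (m : ℕ) : (Jmat m)ᵀ * Jmat m = 1 := by
  rw [Jmat_transpose, Matrix.neg_mul, Jmat_mul_Jmat, neg_neg]

lemma sympInv_mul {n m k : ℕ} (A : Matrix (Fin n ⊕ Fin n) (Fin m ⊕ Fin m) ℝ)
    (B : Matrix (Fin m ⊕ Fin m) (Fin k ⊕ Fin k) ℝ) :
    sympInv (A * B) = sympInv B * sympInv A := by
  simp only [sympInv, Matrix.transpose_mul, Matrix.mul_assoc]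
  rw [← Matrix.mul_assoc (Jmat m) ((Jmat m)ᵀ), J_mul_Jt, Matrix.one_mul]

lemma sympInv_sympInv {n k : ℕ} (U : Matrix (Fin n ⊕ Fin n) (Fin k ⊕ Fin k) ℝ) :
    sympInv (sympInv U) = U := by
  simp only [sympInv, Matrix.transpose_mul, Matrix.transpose_transpose, Jmat_transpose,
    Matrix.transpose_neg, Matrix.neg_mul, Matrix.mul_neg, neg_neg, Matrix.mul_assoc]
  rw [Jmat_mul_Jmat, ← Matrix.mul_assoc (Jmat n) (Jmat n), Jmat_mul_Jmat]
  simp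

/-- The symplectic bilinear form on `ℝ^{2n}`. -/
def Bform (n : ℕ) : LinearMap.BilinForm ℝ (Fin n ⊕ Fin n → ℝ) :=
  LinearMap.mk₂ ℝ (fun x y => x ⬝ᵥ (Jmat n *ᵥ y))
    (fun x x' y => by simp [add_dotProduct])
    (fun c x y => by simp [smul_dotProduct])
    (fun x y y' => by simp [Matrix.mulVec_add, dotProduct_add])
    (fun c x y => by simp [Matrix.mulVec_smul, dotProduct_smul])

lemma Bform_apply (n : ℕ) (x y : Fin n ⊕ Fin n → ℝ) :
    Bform n x y = x ⬝ᵥ (Jmat n *ᵥ y) := rfl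

lemma mulVec_dot {m p : ℕ} (A : Matrix (Fin m ⊕ Fin m) (Fin p ⊕ Fin p) ℝ)
    (u : Fin p ⊕ Fin p → ℝ) (z : Fin m ⊕ Fin m → ℝ) :
    (A *ᵥ u) ⬝ᵥ z = u ⬝ᵥ (Aᵀ *ᵥ z) := by
  rw [dotProduct_comm, dotProduct_mulVec, dotProduct_comm, Matrix.mulVec_transpose]

lemma Bform_skew (n : ℕ) (x y : Fin n ⊕ Fin n → ℝ) :
    Bform n x y = -Bform n y x := by
  rw [Bform_apply, Bform_apply, dotProduct_comm, mulVec_dot, Jmat_transpose,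
    Matrix.neg_mulVec, dotProduct_neg]

lemma Bform_isAlt (n : ℕ) : (Bform n).IsAlt := by
  intro x
  have := Bform_skew n x x
  linarith

lemma Bform_nondeg (n : ℕ) : (Bform n).Nondegenerate := by
  refine (LinearMap.IsRefl.nondegenerate_iff_separatingLeft (Bform_isAlt n).isRefl).mpr ?_
  intro x h
  have hvm : x ᵥ* Jmat n = 0 := by
    funext j
    have := h (Pi.single j 1)
    rwa [Bform_apply, dotProduct_mulVec, dotProduct_single, mul_one] at this
  have : x ᵥ* (Jmat n * (Jmat n)ᵀ) = 0 := by
    rw [← Matrix.vecMul_vecMul, hvm, Matrix.zero_vecMul]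
  rwa [J_mul_Jt, Matrix.vecMul_one] at this

/-- Symplectic basis existence for a nondegenerate alternating bilinear form. -/
lemma sympBasis : ∀ (k : ℕ) (V : Type) [AddCommGroup V] [Module ℝ V]
    [FiniteDimensional ℝ V] (B : LinearMap.BilinForm ℝ V), B.IsAlt → B.Nondegenerate →
    Module.finrank ℝ V = 2 * k →
    ∃ e f : Fin k → V, (∀ i j, B (e i) (e j) = 0) ∧ (∀ i j, B (f i) (f j) = 0) ∧
      (∀ i j, B (e i) (f j) = if i = j then 1 else 0) := by
  intro k
  induction k with
  | zero =>
    intro V _ _ _ B _ _ _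
    exact ⟨Fin.elim0, Fin.elim0, fun i => i.elim0, fun i => i.elim0, fun i => i.elim0⟩
  | succ k ih =>
    intro V _ _ _ B halt hnd hdim
    have hrefl : B.IsRefl := halt.isRefl
    -- pick x ≠ 0
    have hpos : 0 < Module.finrank ℝ V := by omega
    have : Nontrivial V := (Module.finrank_pos_iff (R := ℝ) (M := V)).mp hpos
    obtain ⟨x, hx⟩ := exists_ne (0 : V)
    -- pick y with B x y = 1
    have : ¬ (∀ z, B x z = 0) := fun h => hx (hnd.1 x h)
    push_neg at this
    obtain ⟨y', hy'⟩ := this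
    set y : V := (B x y')⁻¹ • y' with hy_def
    have hxy : B x y = 1 := by
      simp [hy_def, _root_.map_smul, LinearMap.map_smul₂, smul_eq_mul, inv_mul_cancel₀ hy']
    have hyx : B y x = -1 := by
      have := halt.neg_eq x y
      rw [← this, hxy]
    -- W = span {x, y}
    set W : Submodule ℝ V := Submodule.span ℝ {x, y} with hW_def
    have hxW : x ∈ W := Submodule.subset_span (by simp)
    have hyW : y ∈ W := Submodule.subset_span (by simp)
    have hWnd : (B.restrict W).Nondegenerate := by
      refine (LinearMap.IsRefl.nondegenerate_iff_separatingLeft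
        (show (B.restrict W).IsAlt from fun m => halt m).isRefl).mpr ?_
      rintro ⟨w, hw⟩ h0
      obtain ⟨a, b, rfl⟩ := Submodule.mem_span_pair.mp hw
      have h1 : B (a • x + b • y) x = 0 := h0 ⟨x, hxW⟩
      have h2 : B (a • x + b • y) y = 0 := h0 ⟨y, hyW⟩
      simp only [map_add, _root_.map_smul, LinearMap.map_smul₂, LinearMap.add_apply, LinearMap.smul_apply,
        smul_eq_mul, halt.self_eq_zero, hxy, hyx] at h1 h2
      have hb : b = 0 := by nlinarith
      have ha : a = 0 := by nlinarith
      simp [ha, hb]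
    have hcompl : IsCompl W (B.orthogonal W) :=
      LinearMap.BilinForm.isCompl_orthogonal_of_restrict_nondegenerate hrefl hWnd
    set W' := B.orthogonal W with hW'_def
    -- restriction to W' is nondegenerate
    have hW'nd : (B.restrict W').Nondegenerate := by
      refine (LinearMap.IsRefl.nondegenerate_iff_separatingLeft
        (show (B.restrict W').IsAlt from fun m => halt m).isRefl).mpr ?_
      rintro ⟨m, hm⟩ h0
      have : ∀ z : V, B m z = 0 := by
        intro z
        have hz : z ∈ W ⊔ W' := by rw [hcompl.sup_eq_top]; trivial
        obtain ⟨zw, hzw, zw', hzw', rfl⟩ := Submodule.mem_sup.mp hz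
        have e1 : B m zw = 0 := hrefl _ _ (hm zw hzw)
        have e2 : B m zw' = 0 := h0 ⟨zw', hzw'⟩
        simp [map_add, e1, e2]
      exact Subtype.ext (hnd.1 m this)
    -- finrank of W is 2
    have hli : LinearIndependent ℝ ![x, y] := by
      refine LinearIndependent.pair_iff.mpr fun s t hst => ?_
      have h1 : B (s • x + t • y) y = 0 := by rw [hst]; simp
      have h2 : B (s • x + t • y) x = 0 := by rw [hst]; simp
      simp only [map_add, _root_.map_smul, LinearMap.map_smul₂, LinearMap.add_apply, LinearMap.smul_apply,
        smul_eq_mul, halt.self_eq_zero, hxy, hyx] at h1 h2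
      constructor <;> nlinarith
    have hWrank : Module.finrank ℝ W = 2 := by
      have : W = Submodule.span ℝ (Set.range ![x, y]) := by
        rw [hW_def]; congr 1; simp [Matrix.range_cons, Matrix.range_empty, Set.pair_comm]
      rw [this, finrank_span_eq_card hli]
      simp
    have hW'rank : Module.finrank ℝ W' = 2 * k := by
      rw [hW'_def, LinearMap.BilinForm.finrank_orthogonal hnd W, hdim, hWrank]
      omega
    -- apply IH
    have halt' : (B.restrict W').IsAlt := fun m => halt m
    obtain ⟨e', f', he', hf', hef'⟩ := ih W' (B.restrict W') halt' hW'nd hW'rank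
    -- orthogonality of x, y with members of W'
    have hxo : ∀ m : W', B x (m : V) = 0 := fun ⟨m, hm⟩ => hm x hxW
    have hyo : ∀ m : W', B y (m : V) = 0 := fun ⟨m, hm⟩ => hm y hyW
    have hox : ∀ m : W', B (m : V) x = 0 := fun m => hrefl _ _ (hxo m)
    have hoy : ∀ m : W', B (m : V) y = 0 := fun m => hrefl _ _ (hyo m)
    refine ⟨Fin.cons x (fun i => (e' i : V)), Fin.cons y (fun i => (f' i : V)), ?_, ?_, ?_⟩
    · intro i j
      induction i using Fin.cases with
      | zero =>
        induction j using Fin.cases with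
        | zero => simpa using halt.self_eq_zero x
        | succ j => simpa using hxo (e' j)
      | succ i =>
        induction j using Fin.cases with
        | zero => simpa using hox (e' i)
        | succ j => simpa using he' i j
    · intro i j
      induction i using Fin.cases with
      | zero =>
        induction j using Fin.cases with
        | zero => simpa using halt.self_eq_zero y
        | succ j => simpa using hyo (f' j)
      | succ i =>
        induction j using Fin.cases with
        | zero => simpa using hoy (f' i)
        | succ j => simpa using hf' i j
    · intro i j
      induction i using Fin.cases with
      | zero =>
        induction j using Fin.cases with
        | zero => simpa using hxy
        | succ j => simpa [Fin.succ_ne_zero j, (Fin.succ_ne_zero j).symm] using hxo (f' j)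
      | succ i =>
        induction j using Fin.cases with
        | zero => simpa [Fin.succ_ne_zero i] using hoy (e' i)
        | succ j => simpa using hef' i j

theorem stmt_18 (n k : ℕ) (P : Matrix (Fin n ⊕ Fin n) (Fin n ⊕ Fin n) ℝ)
    (hP2 : P * P = P) (hPplus : sympInv P = P) (hrank : P.rank = 2 * k) :
    ∃ U : Matrix (Fin n ⊕ Fin n) (Fin k ⊕ Fin k) ℝ,
      sympInv U * U = 1 ∧ P = U * sympInv U := by
  -- the adjoint identity
  have hJP : Pᵀ * Jmat n = Jmat n * P := by
    conv_rhs => rw [← hPplus]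
    rw [sympInv, Matrix.mul_assoc, ← Matrix.mul_assoc (Jmat n) ((Jmat n)ᵀ), J_mul_Jt,
      Matrix.one_mul]
  have hadj : ∀ u z, Bform n (P *ᵥ u) z = Bform n u (P *ᵥ z) := by
    intro u z
    rw [Bform_apply, Bform_apply, mulVec_dot, Matrix.mulVec_mulVec, hJP,
      ← Matrix.mulVec_mulVec]
  -- the range of P
  set V : Submodule ℝ (Fin n ⊕ Fin n → ℝ) := LinearMap.range P.mulVecLin with hV_def
  have hVrank : Module.finrank ℝ V = 2 * k := hrank
  have hmemV : ∀ w, w ∈ V ↔ ∃ u, P *ᵥ u = w := by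
    intro w
    simp [hV_def, LinearMap.mem_range, Matrix.mulVecLin_apply]
  have hfix : ∀ w ∈ V, P *ᵥ w = w := by
    intro w hw
    obtain ⟨u, rfl⟩ := (hmemV w).mp hw
    rw [Matrix.mulVec_mulVec, hP2]
  -- the restricted form is alternating & nondegenerate
  have halt : ((Bform n).restrict V).IsAlt := fun m => Bform_isAlt n m
  have hnd : ((Bform n).restrict V).Nondegenerate := by
    refine (LinearMap.IsRefl.nondegenerate_iff_separatingLeft halt.isRefl).mpr ?_
    rintro ⟨v, hv⟩ h0
    have h1 : ∀ w ∈ V, Bform n v w = 0 := fun w hw => h0 ⟨w, hw⟩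
    obtain ⟨u, hu⟩ := (hmemV v).mp hv
    have h2 : ∀ z, Bform n v z = 0 := by
      intro z
      have hsplit : z = P *ᵥ z + (z - P *ᵥ z) := by ring_nf
      rw [hsplit, map_add]
      have e1 : Bform n v (P *ᵥ z) = 0 := h1 _ ((hmemV _).mpr ⟨z, rfl⟩)
      have e2 : Bform n v (z - P *ᵥ z) = 0 := by
        rw [← hu, hadj]
        have : P *ᵥ (z - P *ᵥ z) = 0 := by
          rw [Matrix.mulVec_sub, Matrix.mulVec_mulVec, hP2, sub_self]
        rw [this, map_zero]
      rw [e1, e2, add_zero]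
    exact Subtype.ext ((Bform_nondeg n).1 v h2)
  -- symplectic basis of V
  obtain ⟨e, f, he, hf, hef⟩ := sympBasis k V ((Bform n).restrict V) halt hnd hVrank
  set v : Fin k ⊕ Fin k → (Fin n ⊕ Fin n → ℝ) :=
    Sum.elim (fun i => (e i : Fin n ⊕ Fin n → ℝ)) (fun i => (f i : Fin n ⊕ Fin n → ℝ)) with hv_def
  have hvV : ∀ a, v a ∈ V := by rintro (i | i) <;> simp [hv_def]
  have hGram : ∀ a b, Bform n (v a) (v b) = Jmat k a b := by
    rintro (i | i) (j | j)
    · simpa [hv_def, Jmat] using he i j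
    · have := hef i j
      simpa [hv_def, Jmat, Matrix.one_apply] using this
    · have := hef j i
      have h2 : Bform n (f i : _) (e j : _) = -((Bform n) (e j : _) (f i : _)) := Bform_skew n _ _
      rw [show ((Bform n).restrict V) (e j) (f i) = Bform n (e j : _) (f i : _) from rfl] at this
      simp only [hv_def, Sum.elim_inr, Sum.elim_inl, h2, this]
      simp [Jmat, Matrix.one_apply, eq_comm]
    · simpa [hv_def, Jmat] using hf i j
  -- the matrix U
  set U : Matrix (Fin n ⊕ Fin n) (Fin k ⊕ Fin k) ℝ := Matrix.of (fun r a => v a r) with hU_def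
  have hUJU : Uᵀ * Jmat n * U = Jmat k := by
    ext a b
    have h := hGram a b
    rw [Bform_apply] at h
    rw [Matrix.mul_assoc]
    simpa [Matrix.mul_apply, Matrix.mulVec, dotProduct, hU_def, Finset.mul_sum] using h
  have hU1 : sympInv U * U = 1 := by
    rw [sympInv, Matrix.mul_assoc, Matrix.mul_assoc, ← Matrix.mul_assoc Uᵀ, hUJU, Jt_mul_J]
  -- P * U = U
  have hcol : ∀ a, P *ᵥ v a = v a := fun a => hfix _ (hvV a)
  have hPU : P * U = U := by
    ext r a
    have := congrFun (hcol a) r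
    simpa [Matrix.mul_apply, Matrix.mulVec, dotProduct, hU_def] using this
  -- range U = V
  have hle : LinearMap.range U.mulVecLin ≤ V := by
    rintro w ⟨x, rfl⟩
    refine (hmemV _).mpr ⟨U.mulVecLin x, ?_⟩
    rw [Matrix.mulVecLin_apply, Matrix.mulVec_mulVec, hPU]
  have hinj : Function.Injective U.mulVecLin := by
    intro x y hxy
    simp only [Matrix.mulVecLin_apply] at hxy
    have h := congrArg (fun w => sympInv U *ᵥ w) hxy
    simpa [Matrix.mulVec_mulVec, hU1] using h
  have hUrank : Module.finrank ℝ (LinearMap.range U.mulVecLin) = 2 * k := by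
    rw [LinearMap.finrank_range_of_inj hinj, Module.finrank_pi]
    simp [two_mul]
  have hVeq : LinearMap.range U.mulVecLin = V :=
    Submodule.eq_of_le_of_finrank_le hle (by rw [hVrank, hUrank])
  -- Q * P = P where Q = U * sympInv U
  have hQP : U * sympInv U * P = P := by
    have key : ∀ x, (U * sympInv U) *ᵥ (P *ᵥ x) = P *ᵥ x := by
      intro x
      have hx : P *ᵥ x ∈ LinearMap.range U.mulVecLin := by
        rw [hVeq]; exact (hmemV _).mpr ⟨x, rfl⟩
      obtain ⟨z, hz⟩ := hx
      rw [Matrix.mulVecLin_apply] at hz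
      rw [← hz, Matrix.mulVec_mulVec, Matrix.mul_assoc, hU1, Matrix.mul_one]
    ext r c
    have h : (U * sympInv U * P) *ᵥ Pi.single c 1 = P *ᵥ Pi.single c 1 := by
      rw [← Matrix.mulVec_mulVec]; exact key _
    rw [Matrix.mulVec_single_one, Matrix.mulVec_single_one] at h
    exact congrFun h r
  -- conclude
  have hQ : sympInv (U * sympInv U) = U * sympInv U := by
    rw [sympInv_mul, sympInv_sympInv]
  have hPQ : P * (U * sympInv U) = U * sympInv U := by
    rw [← Matrix.mul_assoc, hPU]
  have hfin := congrArg sympInv hQP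
  rw [sympInv_mul, hPplus, hQ] at hfin
  exact ⟨U, hU1, by rw [← hPQ, hfin]⟩
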